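/- Let G be a connected simple graph of order n with diam(G) = 2 and β(G) = n − 3, with twin graph G*, and let v be a vertex of G such that Γ_2^*(v^*) ≠ ∅ and Γ_1(v) is homogeneous. Then |Γ_2^*(v^*)| ≤ 3. -/

import Mathlib

namespace PaperMetricDim

open SimpleGraph

variable {V : Type*}

/-- A set `W` of vertices resolves the graph `G`: any two distinct vertices have
different distance to some vertex of `W`. -/
def Resolves (G : SimpleGraph V) (W : Set V) : Prop :=
  ∀ u v : V, u ≠ v → ∃ w ∈ W, G.dist u w ≠ G.dist v w

/-- The metric dimension of `G`: the minimum cardinality of a resolving set. -/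
noncomputable def metricDim (G : SimpleGraph V) : ℕ :=
  sInf {k : ℕ | ∃ W : Set V, Resolves G W ∧ W.ncard = k}

/-- `G` is connected and has diameter exactly `d`. -/
def diamEq (G : SimpleGraph V) (d : ℕ) : Prop :=
  G.Connected ∧ (∀ u v : V, G.dist u v ≤ d) ∧ ∃ u v : V, G.dist u v = d

/-- A set of vertices is homogeneous if it induces a complete or an empty subgraph. -/
def Homogeneous (G : SimpleGraph V) (S : Set V) : Prop :=
  (∀ a ∈ S, ∀ b ∈ S, a ≠ b → G.Adj a b) ∨ (∀ a ∈ S, ∀ b ∈ S, ¬ G.Adj a b)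

/-- Two distinct vertices are twins: they have the same neighbours apart from
each other. -/
def Twins (G : SimpleGraph V) (u v : V) : Prop :=
  u ≠ v ∧ G.neighborSet u \ {v} = G.neighborSet v \ {u}

/-- The twin equivalence relation: equal or twins. -/
def twinRel (G : SimpleGraph V) (u v : V) : Prop := u = v ∨ Twins G u v

/-- The twin class of a vertex. -/
def twinClass (G : SimpleGraph V) (v : V) : Set V := {u : V | twinRel G v u}

/-- The vertices of the twin graph: twin equivalence classes. -/
def TwinVertex (G : SimpleGraph V) : Type _ := {S : Set V // ∃ v : V, S = twinClass G v}

/-- The twin graph `G*` of `G`: twin classes, two distinct classes being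
adjacent iff (some, equivalently all) representatives are adjacent in `G`. -/
def twinGraph (G : SimpleGraph V) : SimpleGraph (TwinVertex G) where
  Adj A B := A ≠ B ∧ ∃ a ∈ A.1, ∃ b ∈ B.1, G.Adj a b
  symm := by
    constructor
    rintro A B ⟨hne, a, ha, b, hb, hab⟩
    exact ⟨hne.symm, b, hb, a, ha, hab.symm⟩
  loopless := by constructor; rintro A ⟨hne, -⟩; exact hne rfl

/-- The twin class of `v`, as a vertex of the twin graph. -/
def cls (G : SimpleGraph V) (v : V) : TwinVertex G := ⟨twinClass G v, v, rfl⟩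

/-- A twin-graph vertex of type (1): a singleton class. -/
def typeOne (G : SimpleGraph V) (A : TwinVertex G) : Prop := ∃ v : V, A.1 = {v}

/-- A twin-graph vertex of type (K): a class with at least two vertices inducing
a complete subgraph. -/
def typeK (G : SimpleGraph V) (A : TwinVertex G) : Prop :=
  A.1.Nontrivial ∧ ∀ a ∈ A.1, ∀ b ∈ A.1, a ≠ b → G.Adj a b

/-- A twin-graph vertex of type (N): a class with at least two vertices inducing
an empty subgraph. -/
def typeN (G : SimpleGraph V) (A : TwinVertex G) : Prop :=
  A.1.Nontrivial ∧ ∀ a ∈ A.1, ∀ b ∈ A.1, ¬ G.Adj a b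

/-- Type (1K): type (1) or type (K). -/
def type1K (G : SimpleGraph V) (A : TwinVertex G) : Prop := typeOne G A ∨ typeK G A

/-- Type (1N): type (1) or type (N). -/
def type1N (G : SimpleGraph V) (A : TwinVertex G) : Prop := typeOne G A ∨ typeN G A

/-- Type (KN): type (K) or type (N). -/
def typeKN (G : SimpleGraph V) (A : TwinVertex G) : Prop := typeK G A ∨ typeN G A

/-- `Γ_i(v)`: the set of vertices at distance `i` from `v`. -/
def Gamma (G : SimpleGraph V) (i : ℕ) (v : V) : Set V := {u : V | G.dist u v = i}

/-- `Γ_i^*(v^*)`: the set of twin-graph vertices at distance `i` from `v^*`. -/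
def GammaStar (G : SimpleGraph V) (i : ℕ) (v : V) : Set (TwinVertex G) :=
  {A : TwinVertex G | (twinGraph G).dist A (cls G v) = i}

/-- `R_1(v)`: neighbours of `v` having a neighbour at distance 2 from `v`. -/
def R1 (G : SimpleGraph V) (v : V) : Set V :=
  {x ∈ Gamma G 1 v | ∃ y ∈ Gamma G 2 v, G.Adj x y}

/-- `R_2(v) = Γ_1(v) \ R_1(v)`. -/
def R2 (G : SimpleGraph V) (v : V) : Set V := Gamma G 1 v \ R1 G v

/-- `R_1^*(v^*)`: twin-graph neighbours of `v^*` having a neighbour in `Γ_2^*(v^*)`. -/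
def R1Star (G : SimpleGraph V) (v : V) : Set (TwinVertex G) :=
  {A ∈ GammaStar G 1 v | ∃ B ∈ GammaStar G 2 v, (twinGraph G).Adj A B}

/-- `R_2^*(v^*) = Γ_1^*(v^*) \ R_1^*(v^*)`. -/
def R2Star (G : SimpleGraph V) (v : V) : Set (TwinVertex G) :=
  GammaStar G 1 v \ R1Star G v

/-- `M_1(x) = Γ_1(v) ∩ Γ_1(x)` (for `x ∈ Γ_1(v)`). -/
def M1 (G : SimpleGraph V) (v x : V) : Set V := Gamma G 1 v ∩ Gamma G 1 x

/-- `M_2(x) = Γ_1(v) ∩ Γ_2(x)` (for `x ∈ Γ_1(v)`). -/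
def M2 (G : SimpleGraph V) (v x : V) : Set V := Gamma G 1 v ∩ Gamma G 2 x

/-- Structure `G_1`: the twin graph is `K_3` and has at most one vertex of type (1K). -/
def structG1 (G : SimpleGraph V) : Prop :=
  ∃ a b c : TwinVertex G, a ≠ b ∧ a ≠ c ∧ b ≠ c ∧
    (∀ X : TwinVertex G, X = a ∨ X = b ∨ X = c) ∧
    (twinGraph G).Adj a b ∧ (twinGraph G).Adj a c ∧ (twinGraph G).Adj b c ∧
    (∀ X Y : TwinVertex G, type1K G X → type1K G Y → X = Y)

/-- Structure `G_2`: the twin graph is the path `P_3` with (a) centre of type (N)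
and some leaf of type (K), or (b) one leaf of type (K) and the other of type (KN). -/
def structG2 (G : SimpleGraph V) : Prop :=
  ∃ a b c : TwinVertex G, a ≠ b ∧ a ≠ c ∧ b ≠ c ∧
    (∀ X : TwinVertex G, X = a ∨ X = b ∨ X = c) ∧
    (twinGraph G).Adj a b ∧ (twinGraph G).Adj b c ∧ ¬ (twinGraph G).Adj a c ∧
    ((typeN G b ∧ (typeK G a ∨ typeK G c)) ∨
     (typeK G a ∧ typeKN G c) ∨ (typeK G c ∧ typeKN G a))

/-- Structure `G_3`: the twin graph is the paw, the triangle being `u, p, q` with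
the pendant vertex `l` attached to `u`; `p` is of type (N), `q` of type (1K),
`l` of type (1N); and if `q` is of type (K) then neither `l` nor `u` is of type (N). -/
def structG3 (G : SimpleGraph V) : Prop :=
  ∃ u p q l : TwinVertex G,
    u ≠ p ∧ u ≠ q ∧ u ≠ l ∧ p ≠ q ∧ p ≠ l ∧ q ≠ l ∧
    (∀ X : TwinVertex G, X = u ∨ X = p ∨ X = q ∨ X = l) ∧
    (twinGraph G).Adj u p ∧ (twinGraph G).Adj u q ∧ (twinGraph G).Adj p q ∧
    (twinGraph G).Adj u l ∧ ¬ (twinGraph G).Adj p l ∧ ¬ (twinGraph G).Adj q l ∧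
    typeN G p ∧ type1K G q ∧ type1N G l ∧
    (typeK G q → ¬ typeN G l ∧ ¬ typeN G u)

/-- Structure `G_4`: the twin graph is the cycle `C_5` and every vertex is of type (1). -/
def structG4 (G : SimpleGraph V) : Prop :=
  ∃ v0 v1 v2 v3 v4 : TwinVertex G,
    v0 ≠ v1 ∧ v0 ≠ v2 ∧ v0 ≠ v3 ∧ v0 ≠ v4 ∧ v1 ≠ v2 ∧ v1 ≠ v3 ∧ v1 ≠ v4 ∧
    v2 ≠ v3 ∧ v2 ≠ v4 ∧ v3 ≠ v4 ∧
    (∀ X : TwinVertex G, X = v0 ∨ X = v1 ∨ X = v2 ∨ X = v3 ∨ X = v4) ∧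
    (twinGraph G).Adj v0 v1 ∧ (twinGraph G).Adj v1 v2 ∧ (twinGraph G).Adj v2 v3 ∧
    (twinGraph G).Adj v3 v4 ∧ (twinGraph G).Adj v4 v0 ∧
    ¬ (twinGraph G).Adj v0 v2 ∧ ¬ (twinGraph G).Adj v1 v3 ∧ ¬ (twinGraph G).Adj v2 v4 ∧
    ¬ (twinGraph G).Adj v3 v0 ∧ ¬ (twinGraph G).Adj v4 v1 ∧
    (∀ X : TwinVertex G, typeOne G X)

/-- Structure `G_5`: the twin graph is `C_5` with one chord (cycle `v0 v1 v2 v3 v4`,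
chord `v0 v2`); the two adjacent degree-2 vertices `v3, v4` are of type (1), the
other vertices of type (1K). -/
def structG5 (G : SimpleGraph V) : Prop :=
  ∃ v0 v1 v2 v3 v4 : TwinVertex G,
    v0 ≠ v1 ∧ v0 ≠ v2 ∧ v0 ≠ v3 ∧ v0 ≠ v4 ∧ v1 ≠ v2 ∧ v1 ≠ v3 ∧ v1 ≠ v4 ∧
    v2 ≠ v3 ∧ v2 ≠ v4 ∧ v3 ≠ v4 ∧
    (∀ X : TwinVertex G, X = v0 ∨ X = v1 ∨ X = v2 ∨ X = v3 ∨ X = v4) ∧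
    (twinGraph G).Adj v0 v1 ∧ (twinGraph G).Adj v1 v2 ∧ (twinGraph G).Adj v2 v3 ∧
    (twinGraph G).Adj v3 v4 ∧ (twinGraph G).Adj v4 v0 ∧ (twinGraph G).Adj v0 v2 ∧
    ¬ (twinGraph G).Adj v1 v3 ∧ ¬ (twinGraph G).Adj v1 v4 ∧ ¬ (twinGraph G).Adj v2 v4 ∧
    typeOne G v3 ∧ typeOne G v4 ∧ type1K G v0 ∧ type1K G v1 ∧ type1K G v2

/-- Structure `G_6`: the twin graph is `C_5` with two adjacent chords (cycle
`v0 v1 v2 v3 v4`, chords `v0 v2` and `v0 v3`, so `v0` has degree 4); `v0` is of any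
type, the other vertices of type (1K); no two non-adjacent vertices are both of
type (K), and no two adjacent vertices have the different types (K) and (N). -/
def structG6 (G : SimpleGraph V) : Prop :=
  ∃ v0 v1 v2 v3 v4 : TwinVertex G,
    v0 ≠ v1 ∧ v0 ≠ v2 ∧ v0 ≠ v3 ∧ v0 ≠ v4 ∧ v1 ≠ v2 ∧ v1 ≠ v3 ∧ v1 ≠ v4 ∧
    v2 ≠ v3 ∧ v2 ≠ v4 ∧ v3 ≠ v4 ∧
    (∀ X : TwinVertex G, X = v0 ∨ X = v1 ∨ X = v2 ∨ X = v3 ∨ X = v4) ∧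
    (twinGraph G).Adj v0 v1 ∧ (twinGraph G).Adj v1 v2 ∧ (twinGraph G).Adj v2 v3 ∧
    (twinGraph G).Adj v3 v4 ∧ (twinGraph G).Adj v4 v0 ∧ (twinGraph G).Adj v0 v2 ∧
    (twinGraph G).Adj v0 v3 ∧
    ¬ (twinGraph G).Adj v1 v3 ∧ ¬ (twinGraph G).Adj v1 v4 ∧ ¬ (twinGraph G).Adj v2 v4 ∧
    type1K G v1 ∧ type1K G v2 ∧ type1K G v3 ∧ type1K G v4 ∧
    (∀ X Y : TwinVertex G, X ≠ Y → ¬ (twinGraph G).Adj X Y →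
      ¬ (typeK G X ∧ typeK G Y)) ∧
    (∀ X Y : TwinVertex G, (twinGraph G).Adj X Y → ¬ (typeK G X ∧ typeN G Y))

/-- Structure `G_7`: the twin graph is the kite (`K_4` minus an edge, vertices
`a, b` of degree 3 in the kite and `c, d` the non-adjacent pair) with a pendant
vertex `l` attached to the degree-3 vertex `a`; `l` is of type (1), `a` and `b`
are of type (1K), one of `c, d` is of type (K) and the other of type (1). -/
def structG7 (G : SimpleGraph V) : Prop :=
  ∃ a b c d l : TwinVertex G,
    a ≠ b ∧ a ≠ c ∧ a ≠ d ∧ a ≠ l ∧ b ≠ c ∧ b ≠ d ∧ b ≠ l ∧ c ≠ d ∧ c ≠ l ∧ d ≠ l ∧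
    (∀ X : TwinVertex G, X = a ∨ X = b ∨ X = c ∨ X = d ∨ X = l) ∧
    (twinGraph G).Adj a b ∧ (twinGraph G).Adj a c ∧ (twinGraph G).Adj a d ∧
    (twinGraph G).Adj b c ∧ (twinGraph G).Adj b d ∧ (twinGraph G).Adj a l ∧
    ¬ (twinGraph G).Adj c d ∧ ¬ (twinGraph G).Adj b l ∧ ¬ (twinGraph G).Adj c l ∧
    ¬ (twinGraph G).Adj d l ∧
    typeOne G l ∧ type1K G a ∧ type1K G b ∧ typeK G c ∧ typeOne G d

/-- Structure `G_8`: the twin graph is the kite (`K_4` minus an edge, `a, b` of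
degree 3 and `c, d` the non-adjacent degree-2 pair); one degree-2 vertex `c` is of
type (K) and the other `d` of type (1); one degree-3 vertex `a` is of type (N)
and the other `b` of type (1K). -/
def structG8 (G : SimpleGraph V) : Prop :=
  ∃ a b c d : TwinVertex G,
    a ≠ b ∧ a ≠ c ∧ a ≠ d ∧ b ≠ c ∧ b ≠ d ∧ c ≠ d ∧
    (∀ X : TwinVertex G, X = a ∨ X = b ∨ X = c ∨ X = d) ∧
    (twinGraph G).Adj a b ∧ (twinGraph G).Adj a c ∧ (twinGraph G).Adj a d ∧
    (twinGraph G).Adj b c ∧ (twinGraph G).Adj b d ∧ ¬ (twinGraph G).Adj c d ∧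
    typeN G a ∧ type1K G b ∧ typeK G c ∧ typeOne G d

/-- Structure `G_9`: the twin graph is `C_4`, two adjacent vertices of type (K)
and the other two of type (1). -/
def structG9 (G : SimpleGraph V) : Prop :=
  ∃ v0 v1 v2 v3 : TwinVertex G,
    v0 ≠ v1 ∧ v0 ≠ v2 ∧ v0 ≠ v3 ∧ v1 ≠ v2 ∧ v1 ≠ v3 ∧ v2 ≠ v3 ∧
    (∀ X : TwinVertex G, X = v0 ∨ X = v1 ∨ X = v2 ∨ X = v3) ∧
    (twinGraph G).Adj v0 v1 ∧ (twinGraph G).Adj v1 v2 ∧ (twinGraph G).Adj v2 v3 ∧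
    (twinGraph G).Adj v3 v0 ∧ ¬ (twinGraph G).Adj v0 v2 ∧ ¬ (twinGraph G).Adj v1 v3 ∧
    typeK G v0 ∧ typeK G v1 ∧ typeOne G v2 ∧ typeOne G v3

/-- Structure `G_10`: the twin graph is the wheel `C_4 ∨ K_1` (hub `h`, rim
`v0 v1 v2 v3`); two adjacent rim (degree-3) vertices `v0, v1` are of type (K), the
hub is of type (1K), and the other vertices of type (1). -/
def structG10 (G : SimpleGraph V) : Prop :=
  ∃ h v0 v1 v2 v3 : TwinVertex G,
    h ≠ v0 ∧ h ≠ v1 ∧ h ≠ v2 ∧ h ≠ v3 ∧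
    v0 ≠ v1 ∧ v0 ≠ v2 ∧ v0 ≠ v3 ∧ v1 ≠ v2 ∧ v1 ≠ v3 ∧ v2 ≠ v3 ∧
    (∀ X : TwinVertex G, X = h ∨ X = v0 ∨ X = v1 ∨ X = v2 ∨ X = v3) ∧
    (twinGraph G).Adj h v0 ∧ (twinGraph G).Adj h v1 ∧ (twinGraph G).Adj h v2 ∧
    (twinGraph G).Adj h v3 ∧
    (twinGraph G).Adj v0 v1 ∧ (twinGraph G).Adj v1 v2 ∧ (twinGraph G).Adj v2 v3 ∧
    (twinGraph G).Adj v3 v0 ∧ ¬ (twinGraph G).Adj v0 v2 ∧ ¬ (twinGraph G).Adj v1 v3 ∧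
    typeK G v0 ∧ typeK G v1 ∧ type1K G h ∧ typeOne G v2 ∧ typeOne G v3

section Infra

variable {V : Type*} (G : SimpleGraph V)

/-- `t` distinguishes `x` and `y` by adjacency. -/
def Dst (x y t : V) : Prop := ¬ (G.Adj t x ↔ G.Adj t y)

/-- A set all whose internal pairs are distinguished from outside. -/
def FreeSet (S : Set V) : Prop :=
  ∀ x ∈ S, ∀ y ∈ S, x ≠ y → ∃ t, t ∉ S ∧ Dst G x y t

variable {G}

lemma Dst.symm' {x y t : V} (h : Dst G x y t) : Dst G y x t := fun h' => h h'.symm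

lemma twins_symm {a b : V} (h : Twins G a b) : Twins G b a := ⟨h.1.symm, h.2.symm⟩

lemma twinRel_refl (a : V) : twinRel G a a := Or.inl rfl

lemma twinRel_symm {a b : V} (h : twinRel G a b) : twinRel G b a := by
  rcases h with rfl | h
  · exact Or.inl rfl
  · exact Or.inr (twins_symm h)

lemma twins_chain {x y z : V} (hxy : Twins G x y) (hyz : Twins G y z) (hxz : x ≠ z) :
    G.neighborSet x \ {z} ⊆ G.neighborSet z \ {x} := by
  rintro t ⟨ht, htz⟩
  simp only [SimpleGraph.mem_neighborSet, Set.mem_singleton_iff] at ht htz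
  have htx : t ≠ x := fun h => G.loopless.irrefl x (h ▸ ht)
  refine ⟨?_, by simpa using htx⟩
  simp only [SimpleGraph.mem_neighborSet]
  by_cases hty : t = y
  · subst hty
    by_contra hzy
    have hx1 : x ∈ G.neighborSet t \ {z} := by
      simp only [Set.mem_diff, SimpleGraph.mem_neighborSet, Set.mem_singleton_iff]
      exact ⟨ht.symm, hxz⟩
    have hx2 := hyz.2 ▸ hx1
    simp only [Set.mem_diff, SimpleGraph.mem_neighborSet, Set.mem_singleton_iff] at hx2
    have hz1 : z ∈ G.neighborSet x \ {t} := by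
      simp only [Set.mem_diff, SimpleGraph.mem_neighborSet, Set.mem_singleton_iff]
      exact ⟨hx2.1.symm, fun h => hyz.1 h.symm⟩
    have hz2 := hxy.2 ▸ hz1
    simp only [Set.mem_diff, SimpleGraph.mem_neighborSet, Set.mem_singleton_iff] at hz2
    exact hzy hz2.1.symm
  · have h1 : t ∈ G.neighborSet x \ {y} := by
      simp only [Set.mem_diff, SimpleGraph.mem_neighborSet, Set.mem_singleton_iff]
      exact ⟨ht, hty⟩
    have h2 := hxy.2 ▸ h1
    simp only [Set.mem_diff, SimpleGraph.mem_neighborSet, Set.mem_singleton_iff] at h2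
    have h3 : t ∈ G.neighborSet y \ {z} := by
      simp only [Set.mem_diff, SimpleGraph.mem_neighborSet, Set.mem_singleton_iff]
      exact ⟨h2.1, htz⟩
    have h4 := hyz.2 ▸ h3
    simp only [Set.mem_diff, SimpleGraph.mem_neighborSet, Set.mem_singleton_iff] at h4
    exact h4.1

lemma twinRel_trans {a b c : V} (h1 : twinRel G a b) (h2 : twinRel G b c) : twinRel G a c := by
  rcases h1 with rfl | h1
  · exact h2
  rcases h2 with rfl | h2
  · exact Or.inr h1
  by_cases hac : a = c
  · exact Or.inl hac
  exact Or.inr ⟨hac, Set.Subset.antisymm (twins_chain h1 h2 hac)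
    (twins_chain (twins_symm h2) (twins_symm h1) (Ne.symm hac))⟩

lemma twinClass_eq_of_rel {a b : V} (h : twinRel G a b) : twinClass G a = twinClass G b := by
  ext x
  constructor
  · intro hx; exact twinRel_trans (twinRel_symm h) hx
  · intro hx; exact twinRel_trans h hx

lemma rel_of_twinClass_eq {a b : V} (h : twinClass G a = twinClass G b) : twinRel G a b := by
  have hb : b ∈ twinClass G b := twinRel_refl b
  rw [← h] at hb
  exact hb

lemma exists_dst {x y : V} (hne : x ≠ y) (h : ¬ twinRel G x y) :
    ∃ t, t ≠ x ∧ t ≠ y ∧ Dst G x y t := by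
  have h2 : ¬ Twins G x y := fun ht => h (Or.inr ht)
  have hset : G.neighborSet x \ {y} ≠ G.neighborSet y \ {x} := fun he => h2 ⟨hne, he⟩
  by_contra hc
  push_neg at hc
  apply hset
  ext t
  simp only [Set.mem_diff, SimpleGraph.mem_neighborSet, Set.mem_singleton_iff]
  constructor
  · rintro ⟨hadj, hty⟩
    have htx : t ≠ x := fun h => G.loopless.irrefl x (h ▸ hadj)
    have hiff := not_not.mp (hc t htx hty)
    exact ⟨(hiff.mp hadj.symm).symm, htx⟩
  · rintro ⟨hadj, htx⟩
    have hty : t ≠ y := fun h => G.loopless.irrefl y (h ▸ hadj)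
    have hiff := not_not.mp (hc t htx hty)
    exact ⟨(hiff.mpr hadj.symm).symm, hty⟩

lemma dist_two {x y : V} (hconn : G.Connected) (hd : ∀ a b : V, G.dist a b ≤ 2)
    (hne : x ≠ y) (hnadj : ¬ G.Adj x y) : G.dist x y = 2 := by
  have h0 : G.dist x y ≠ 0 := fun h => hne (hconn.dist_eq_zero_iff.mp h)
  have h1 : G.dist x y ≠ 1 := fun h => hnadj (SimpleGraph.dist_eq_one_iff_adj.mp h)
  have := hd x y
  omega

lemma common_nbr (hconn : G.Connected) (hd : ∀ a b : V, G.dist a b ≤ 2) {v x : V}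
    (hne : v ≠ x) (hnadj : ¬ G.Adj v x) : ∃ w, G.Adj v w ∧ G.Adj x w := by
  have h2 : G.dist v x = 2 := dist_two hconn hd hne hnadj
  obtain ⟨p, hp⟩ := hconn.exists_walk_length_eq_dist v x
  rw [h2] at hp
  cases p with
  | nil => simp at hp
  | cons h q =>
    cases q with
    | nil => simp at hp
    | cons h' r =>
      cases r with
      | nil => exact ⟨_, h, h'.symm⟩
      | cons h'' r' => simp [SimpleGraph.Walk.length_cons] at hp

lemma resolves_of_free (hconn : G.Connected) (hd : ∀ a b : V, G.dist a b ≤ 2)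
    {S : Set V} (hS : FreeSet G S) : Resolves G Sᶜ := by
  intro x y hxy
  by_cases hx : x ∈ S
  · by_cases hy : y ∈ S
    · obtain ⟨t, htS, hdst⟩ := hS x hx y hy hxy
      refine ⟨t, htS, ?_⟩
      have htx : t ≠ x := fun h => htS (h ▸ hx)
      have hty : t ≠ y := fun h => htS (h ▸ hy)
      by_cases ha : G.Adj t x
      · have hb : ¬ G.Adj t y := fun hb => hdst ⟨fun _ => hb, fun _ => ha⟩
        rw [SimpleGraph.dist_eq_one_iff_adj.mpr ha.symm,
          dist_two hconn hd (Ne.symm hty) (fun h => hb h.symm)]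
        omega
      · have hb : G.Adj t y := by
          by_contra hb
          exact hdst ⟨fun h => absurd h ha, fun h => absurd h hb⟩
        rw [SimpleGraph.dist_eq_one_iff_adj.mpr hb.symm,
          dist_two hconn hd (Ne.symm htx) (fun h => ha h.symm)]
        omega
    · refine ⟨y, hy, ?_⟩
      rw [SimpleGraph.dist_self]
      exact fun h => hxy (hconn.dist_eq_zero_iff.mp h)
  · refine ⟨x, hx, ?_⟩
    rw [SimpleGraph.dist_self]
    exact fun h => hxy (hconn.dist_eq_zero_iff.mp h.symm).symm

lemma noFree [Fintype V] (hconn : G.Connected) (hd : ∀ a b : V, G.dist a b ≤ 2)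
    (hbeta : metricDim G = Fintype.card V - 3)
    {a b c d : V} (hab : a ≠ b) (hac : a ≠ c) (had : a ≠ d) (hbc : b ≠ c) (hbd : b ≠ d)
    (hcd : c ≠ d) (hfree : FreeSet G {a, b, c, d}) : False := by
  classical
  have hcard : ({a, b, c, d} : Set V).ncard = 4 := by
    rw [Set.ncard_insert_of_notMem (by simp [hab, hac, had]) (Set.toFinite _),
        Set.ncard_insert_of_notMem (by simp [hbc, hbd]) (Set.toFinite _),
        Set.ncard_pair hcd]
  have hres : Resolves G ({a, b, c, d} : Set V)ᶜ := resolves_of_free hconn hd hfree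
  have hle : metricDim G ≤ (({a, b, c, d} : Set V)ᶜ).ncard :=
    Nat.sInf_le ⟨_, hres, rfl⟩
  have hsum := Set.ncard_add_ncard_compl ({a, b, c, d} : Set V) (Set.toFinite _) (Set.toFinite _)
  rw [Nat.card_eq_fintype_card, hcard] at hsum
  have hn : 4 ≤ Fintype.card V := by omega
  rw [hbeta] at hle
  omega

end Infra

section Helpers

variable {V : Type*} {G : SimpleGraph V}

lemma mkFree {p q r s : V}
    (h1 : ∃ t, t ∉ ({p, q, r, s} : Set V) ∧ Dst G p q t)
    (h2 : ∃ t, t ∉ ({p, q, r, s} : Set V) ∧ Dst G p r t)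
    (h3 : ∃ t, t ∉ ({p, q, r, s} : Set V) ∧ Dst G p s t)
    (h4 : ∃ t, t ∉ ({p, q, r, s} : Set V) ∧ Dst G q r t)
    (h5 : ∃ t, t ∉ ({p, q, r, s} : Set V) ∧ Dst G q s t)
    (h6 : ∃ t, t ∉ ({p, q, r, s} : Set V) ∧ Dst G r s t) :
    FreeSet G {p, q, r, s} := by
  have sw : ∀ {a b : V}, (∃ t, t ∉ ({p, q, r, s} : Set V) ∧ Dst G a b t) →
      ∃ t, t ∉ ({p, q, r, s} : Set V) ∧ Dst G b a t := by
    rintro a b ⟨t, ht, hd⟩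
    exact ⟨t, ht, hd.symm'⟩
  intro x hx y hy hxy
  simp only [Set.mem_insert_iff, Set.mem_singleton_iff] at hx hy
  rcases hx with rfl | rfl | rfl | rfl <;> rcases hy with rfl | rfl | rfl | rfl <;>
    first
    | exact absurd rfl hxy
    | exact h1 | exact h2 | exact h3 | exact h4 | exact h5 | exact h6
    | exact sw h1 | exact sw h2 | exact sw h3 | exact sw h4 | exact sw h5 | exact sw h6

lemma bad_of_not_free {p q r s : V} (h : ¬ FreeSet G {p, q, r, s}) :
    (∀ t, Dst G p q t → t ∈ ({p, q, r, s} : Set V)) ∨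
    (∀ t, Dst G p r t → t ∈ ({p, q, r, s} : Set V)) ∨
    (∀ t, Dst G p s t → t ∈ ({p, q, r, s} : Set V)) ∨
    (∀ t, Dst G q r t → t ∈ ({p, q, r, s} : Set V)) ∨
    (∀ t, Dst G q s t → t ∈ ({p, q, r, s} : Set V)) ∨
    (∀ t, Dst G r s t → t ∈ ({p, q, r, s} : Set V)) := by
  classical
  unfold FreeSet at h
  push_neg at h
  obtain ⟨x, hx, y, hy, hxy, hall⟩ := h
  have key : ∀ t, Dst G x y t → t ∈ ({p, q, r, s} : Set V) := by
    intro t hd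
    by_contra hts
    exact hall t hts hd
  have key' : ∀ t, Dst G y x t → t ∈ ({p, q, r, s} : Set V) := fun t hd => key t hd.symm'
  simp only [Set.mem_insert_iff, Set.mem_singleton_iff] at hx hy
  rcases hx with rfl | rfl | rfl | rfl <;> rcases hy with rfl | rfl | rfl | rfl <;> tauto

set_option maxHeartbeats 2000000 in
lemma abstract81 {α : Type*} {s : α → α → α → Prop} {h : α → α → Prop} {x0 x1 x2 x3 : α}
    (hs : ∀ a b c, s a b c → h a b) (hsym : ∀ a b, h a b → h b a)
    (htr : ∀ a b c, h a b → h b c → h a c)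
    (c1 : s x0 x1 x2 → s x0 x1 x3 → False) (c2 : s x0 x2 x1 → s x0 x2 x3 → False)
    (c3 : s x0 x3 x1 → s x0 x3 x2 → False) (c4 : s x1 x2 x0 → s x1 x2 x3 → False)
    (c5 : s x1 x3 x0 → s x1 x3 x2 → False) (c6 : s x2 x3 x0 → s x2 x3 x1 → False)
    (t1 : s x0 x1 x2 ∨ s x0 x2 x1 ∨ s x1 x2 x0)
    (t2 : s x0 x1 x3 ∨ s x0 x3 x1 ∨ s x1 x3 x0)
    (t3 : s x0 x2 x3 ∨ s x0 x3 x2 ∨ s x2 x3 x0)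
    (t4 : s x1 x2 x3 ∨ s x1 x3 x2 ∨ s x2 x3 x1) :
    h x0 x1 ∧ h x0 x2 ∧ h x0 x3 ∧ h x1 x2 ∧ h x1 x3 ∧ h x2 x3 := by
  rcases t1 with a|a|a <;> rcases t2 with b|b|b <;> rcases t3 with c|c|c <;>
    rcases t4 with d|d|d <;>
  first
    | (exfalso; solve_by_elim only [c1, c2, c3, c4, c5, c6, a, b, c, d])
    | (have fa := hs _ _ _ a; have fb := hs _ _ _ b; have fc := hs _ _ _ c;
       have fd := hs _ _ _ d;
       have ga := hsym _ _ fa; have gb := hsym _ _ fb; have gc := hsym _ _ fc;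
       have gd := hsym _ _ fd;
       refine ⟨?_, ?_, ?_, ?_, ?_, ?_⟩ <;>
         solve_by_elim (maxDepth := 4) only [fa, fb, fc, fd, ga, gb, gc, gd, htr])

end Helpers

def mat6 (a b c d e f : Bool) : Fin 4 → Fin 4 → Bool :=
  fun i j => ![![false, a, b, c], ![a, false, d, e], ![b, d, false, f], ![c, e, f, false]] i j

set_option synthInstance.maxSize 1000 in
set_option maxHeartbeats 2000000 in
lemma pathLemma : ∀ a b c d e f : Bool,
    ((b ≠ d) ∨ (c ≠ e)) → ((a ≠ d) ∨ (c ≠ f)) → ((a ≠ e) ∨ (b ≠ f)) →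
    ((a ≠ b) ∨ (e ≠ f)) → ((a ≠ c) ∨ (d ≠ f)) → ((b ≠ c) ∨ (d ≠ e)) →
    ∃ i j k l : Fin 4, i ≠ j ∧ i ≠ k ∧ i ≠ l ∧ j ≠ k ∧ j ≠ l ∧ k ≠ l ∧
      mat6 a b c d e f i j = true ∧ mat6 a b c d e f j k = true ∧
      mat6 a b c d e f k l = true ∧ mat6 a b c d e f i k = false ∧
      mat6 a b c d e f i l = false ∧ mat6 a b c d e f j l = false := by decide

section Core

variable {V : Type*} {G : SimpleGraph V}

/-- `Δ(a,b) ⊆ {c}` : the only distinguisher of `a, b` besides themselves is `c`. -/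
def SP (G : SimpleGraph V) (a b c : V) : Prop :=
  ∀ t, Dst G a b t → t = c ∨ t = a ∨ t = b

/-- some pair of the triple `a b c` has its only external distinguisher inside the triple. -/
def Sing3 (G : SimpleGraph V) (a b c : V) : Prop :=
  SP G a b c ∨ SP G a c b ∨ SP G b c a

lemma sp_comm {a b c : V} (h : SP G a b c) : SP G b a c := by
  intro t ht
  rcases h t ht.symm' with h' | h' | h' <;> tauto

lemma sing3_swap23 {a b c : V} (h : Sing3 G a c b) : Sing3 G a b c := by
  rcases h with h | h | h
  · exact Or.inr (Or.inl h)
  · exact Or.inl h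
  · exact Or.inr (Or.inr (sp_comm h))

lemma sing3_rot {a b c : V} (h : Sing3 G b c a) : Sing3 G a b c := by
  rcases h with h | h | h
  · exact Or.inr (Or.inr h)
  · exact Or.inl (sp_comm h)
  · exact Or.inr (Or.inl (sp_comm h))

lemma ntr_ne {a b : V} (h : ¬ twinRel G a b) : a ≠ b := fun he => h (Or.inl he)

lemma ntr_symm {a b : V} (h : ¬ twinRel G a b) : ¬ twinRel G b a :=
  fun ht => h (twinRel_symm ht)

lemma wcases
    (hnf : ∀ a b c d : V, a ≠ b → a ≠ c → a ≠ d → b ≠ c → b ≠ d → c ≠ d →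
      FreeSet G {a, b, c, d} → False)
    {v a b c : V}
    (hga : ¬ G.Adj v a) (hgb : ¬ G.Adj v b) (hgc : ¬ G.Adj v c)
    (hva : a ≠ v) (hvb : b ≠ v) (hvc : c ≠ v)
    (nab : a ≠ b) (nac : a ≠ c) (nbc : b ≠ c)
    {w : V} (hw : G.Adj v w) :
    (∀ t, Dst G a b t → t = c ∨ t = w ∨ t = a ∨ t = b) ∨
    (∀ t, Dst G a c t → t = b ∨ t = w ∨ t = a ∨ t = c) ∨
    (∀ t, Dst G b c t → t = a ∨ t = w ∨ t = b ∨ t = c) := by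
  have hwv : w ≠ v := fun h => G.loopless.irrefl v (h ▸ hw)
  have hwa : w ≠ a := fun h => hga (h ▸ hw)
  have hwb : w ≠ b := fun h => hgb (h ▸ hw)
  have hwc : w ≠ c := fun h => hgc (h ▸ hw)
  have hnof : ¬ FreeSet G {w, a, b, c} := fun hf => hnf w a b c hwa hwb hwc nab nac nbc hf
  have helim : ∀ x : V, ¬ G.Adj v x → x ≠ v →
      (∀ t, Dst G w x t → t ∈ ({w, a, b, c} : Set V)) → False := by
    intro x hgx hxv hb
    have hdv : Dst G w x v := fun hiff => hgx (hiff.mp hw)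
    have hmem := hb v hdv
    simp only [Set.mem_insert_iff, Set.mem_singleton_iff] at hmem
    rcases hmem with h | h | h | h
    exacts [hwv h.symm, hva h.symm, hvb h.symm, hvc h.symm]
  rcases bad_of_not_free hnof with hb | hb | hb | hb | hb | hb
  · exact (helim a hga hva hb).elim
  · exact (helim b hgb hvb hb).elim
  · exact (helim c hgc hvc hb).elim
  · left
    intro t ht
    have := hb t ht
    simp only [Set.mem_insert_iff, Set.mem_singleton_iff] at this
    tauto
  · right; left
    intro t ht
    have := hb t ht
    simp only [Set.mem_insert_iff, Set.mem_singleton_iff] at this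
    tauto
  · right; right
    intro t ht
    have := hb t ht
    simp only [Set.mem_insert_iff, Set.mem_singleton_iff] at this
    tauto

end Core

section Branch3

variable {V : Type*} {G : SimpleGraph V}

lemma branch3 (hconn : G.Connected) (hd : ∀ a b : V, G.dist a b ≤ 2)
    (hnf : ∀ a b c d : V, a ≠ b → a ≠ c → a ≠ d → b ≠ c → b ≠ d → c ≠ d →
      FreeSet G {a, b, c, d} → False)
    {v u1 u2 u3 u4 : V}
    (hg1 : ¬ G.Adj v u1) (hg2 : ¬ G.Adj v u2) (hg3 : ¬ G.Adj v u3) (hg4 : ¬ G.Adj v u4)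
    (hv1 : u1 ≠ v) (hv2 : u2 ≠ v) (hv3 : u3 ≠ v) (hv4 : u4 ≠ v)
    (hvt3 : ¬ twinRel G v u3)
    (n12 : ¬ twinRel G u1 u2) (n13 : ¬ twinRel G u1 u3) (n14 : ¬ twinRel G u1 u4)
    (n23 : ¬ twinRel G u2 u3) (n24 : ¬ twinRel G u2 u4) (n34 : ¬ twinRel G u3 u4)
    (hns : ¬ Sing3 G u1 u2 u3)
    (hF1 : ∀ w, G.Adj v w → G.Adj u3 w)
    (hF2 : ∀ z, G.Adj u3 z → ¬ G.Adj v z → z = u1 ∨ z = u2) : False := by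
  classical
  have ne12 : u1 ≠ u2 := ntr_ne n12
  have ne13 : u1 ≠ u3 := ntr_ne n13
  have ne14 : u1 ≠ u4 := ntr_ne n14
  have ne23 : u2 ≠ u3 := ntr_ne n23
  have ne24 : u2 ≠ u4 := ntr_ne n24
  have ne34 : u3 ≠ u4 := ntr_ne n34
  -- witnesses showing no pair of the triple has its sole distinguisher inside it
  unfold Sing3 SP at hns
  push_neg at hns
  obtain ⟨⟨t12, ht12, ht12c, ht12a, ht12b⟩, ⟨t13, ht13, ht13c, ht13a, ht13b⟩,
    ⟨t23, ht23, ht23c, ht23a, ht23b⟩⟩ := hns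
  -- common neighbours
  obtain ⟨w0, hw0v, hw0u1⟩ := common_nbr hconn hd (Ne.symm hv1) hg1
  obtain ⟨w0', hw0'v, hw0'u2⟩ := common_nbr hconn hd (Ne.symm hv2) hg2
  have hw03 : G.Adj u3 w0 := hF1 w0 hw0v
  have hw0'3 : G.Adj u3 w0' := hF1 w0' hw0'v
  have hw0v' : w0 ≠ v := fun h => G.loopless.irrefl v (h ▸ hw0v)
  have hw0'vne : w0' ≠ v := fun h => G.loopless.irrefl v (h ▸ hw0'v)
  have hw0g : ∀ i : V, ¬ G.Adj v i → w0 ≠ i := fun i hgi h => hgi (h ▸ hw0v)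
  have hw0'g : ∀ i : V, ¬ G.Adj v i → w0' ≠ i := fun i hgi h => hgi (h ▸ hw0'v)
  -- analyse the sets {w0, u1, u2, u3} and {w0', u1, u2, u3}
  have hc0 := wcases hnf hg1 hg2 hg3 hv1 hv2 hv3 ne12 ne13 ne23 hw0v
  have hc0' := wcases hnf hg1 hg2 hg3 hv1 hv2 hv3 ne12 ne13 ne23 hw0'v
  -- from the w0 cases derive: ¬ Adj u2 w0 together with a D-set
  have case0 : (¬ G.Adj u2 w0) ∧
      ((∀ t, Dst G u1 u2 t → t = u3 ∨ t = w0 ∨ t = u1 ∨ t = u2) ∨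
       (∀ t, Dst G u2 u3 t → t = u1 ∨ t = w0 ∨ t = u2 ∨ t = u3)) := by
    rcases hc0 with hb | hb | hb
    · -- pair (u1,u2)
      have h12 : t12 = w0 := by
        rcases hb t12 ht12 with h | h | h | h
        exacts [absurd h ht12c, h, absurd h ht12a, absurd h ht12b]
      subst h12
      have : ¬ G.Adj t12 u2 := fun h => ht12 ⟨fun _ => h, fun _ => hw0u1.symm⟩
      exact ⟨fun h => this h.symm, Or.inl hb⟩
    · -- pair (u1,u3): impossible since w0 is adjacent to both u1 and u3
      exfalso
      have h13 : t13 = w0 := by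
        rcases hb t13 ht13 with h | h | h | h
        exacts [absurd h ht13c, h, absurd h ht13a, absurd h ht13b]
      subst h13
      exact ht13 ⟨fun _ => hw03.symm, fun _ => hw0u1.symm⟩
    · -- pair (u2,u3)
      have h23 : t23 = w0 := by
        rcases hb t23 ht23 with h | h | h | h
        exacts [absurd h ht23c, h, absurd h ht23a, absurd h ht23b]
      subst h23
      have : ¬ G.Adj t23 u2 := fun h => ht23 ⟨fun _ => hw03.symm, fun _ => h⟩
      exact ⟨fun h => this h.symm, Or.inr hb⟩
  -- from the w0' cases derive: ¬ Adj u1 w0' together with a D-set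
  have case0' : (¬ G.Adj u1 w0') ∧
      ((∀ t, Dst G u1 u2 t → t = u3 ∨ t = w0' ∨ t = u1 ∨ t = u2) ∨
       (∀ t, Dst G u1 u3 t → t = u2 ∨ t = w0' ∨ t = u1 ∨ t = u3)) := by
    rcases hc0' with hb | hb | hb
    · have h12 : t12 = w0' := by
        rcases hb t12 ht12 with h | h | h | h
        exacts [absurd h ht12c, h, absurd h ht12a, absurd h ht12b]
      subst h12
      have : ¬ G.Adj t12 u1 := fun h => ht12 ⟨fun _ => hw0'u2.symm, fun _ => h⟩
      exact ⟨fun h => this h.symm, Or.inl hb⟩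
    · have h13 : t13 = w0' := by
        rcases hb t13 ht13 with h | h | h | h
        exacts [absurd h ht13c, h, absurd h ht13a, absurd h ht13b]
      subst h13
      have : ¬ G.Adj t13 u1 := fun h => ht13 ⟨fun _ => hw0'3.symm, fun _ => h⟩
      exact ⟨fun h => this h.symm, Or.inr hb⟩
    · exfalso
      have h23 : t23 = w0' := by
        rcases hb t23 ht23 with h | h | h | h
        exacts [absurd h ht23c, h, absurd h ht23a, absurd h ht23b]
      subst h23
      exact ht23 ⟨fun _ => hw0'3.symm, fun _ => hw0'u2.symm⟩
  obtain ⟨hw0n2, hD0⟩ := case0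
  obtain ⟨hw0'n1, hD0'⟩ := case0'
  have hnew : w0 ≠ w0' := fun h => hw0'n1 (h ▸ hw0u1)
  -- resolve remaining combinations
  have hDst12w0 : Dst G u1 u2 w0 := fun hiff => hw0n2 (hiff.mp hw0u1.symm).symm
  have hDst12w0' : Dst G u1 u2 w0' := fun hiff => hw0'n1 (hiff.mpr hw0'u2.symm).symm
  rcases hD0 with hD0 | hD0
  · -- Δ12 ⊆ {u3, w0}: w0' is also a distinguisher of (u1,u2): contradiction
    exfalso
    rcases hD0 w0' hDst12w0' with h | h | h | h
    · exact hg3 (h ▸ hw0'v)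
    · exact hw0'n1 (h ▸ hw0u1)
    · exact hg1 (h ▸ hw0'v)
    · exact hg2 (h ▸ hw0'v)
  rcases hD0' with hD0' | hD0'
  · exfalso
    rcases hD0' w0 hDst12w0 with h | h | h | h
    · exact hg3 (h ▸ hw0v)
    · exact hw0'n1 (h.symm ▸ hw0u1)
    · exact hg1 (h ▸ hw0v)
    · exact hg2 (h ▸ hw0v)
  -- main case: Δ23 ⊆ {u1, w0}, Δ13 ⊆ {u2, w0'}
  have e34 : ¬ G.Adj u3 u4 := by
    intro h
    rcases hF2 u4 h hg4 with h' | h'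
    exacts [ne14 h'.symm, ne24 h'.symm]
  have e14 : ¬ G.Adj u1 u4 := by
    intro h
    have hdst : Dst G u1 u3 u4 := fun hiff => e34 (hiff.mp h.symm).symm
    rcases hD0' u4 hdst with h' | h' | h' | h'
    exacts [ne24 h'.symm, hg4 (h' ▸ hw0'v), ne14 h'.symm, ne34 h'.symm]
  have e24 : ¬ G.Adj u2 u4 := by
    intro h
    have hdst : Dst G u2 u3 u4 := fun hiff => e34 (hiff.mp h.symm).symm
    rcases hD0 u4 hdst with h' | h' | h' | h'
    exacts [ne14 h'.symm, hg4 (h' ▸ hw0v), ne24 h'.symm, ne34 h'.symm]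
  have u3nbr : G.Adj u3 u1 ∨ G.Adj u3 u2 := by
    obtain ⟨t, htv, ht3, htd⟩ := exists_dst (Ne.symm hv3) hvt3
    by_cases hadj : G.Adj t v
    · exact absurd ⟨fun _ => (hF1 t hadj.symm).symm, fun _ => hadj⟩ htd
    · have ht3adj : G.Adj t u3 := by
        by_contra hno
        exact htd ⟨fun h => absurd h hadj, fun h => absurd h hno⟩
      have := hF2 t ht3adj.symm (fun h => hadj h.symm)
      rcases this with rfl | rfl
      exacts [Or.inl ht3adj.symm, Or.inr ht3adj.symm]
  -- now analyse the triple (u1, u2, u4) with w0 and w0'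
  have hc1 := wcases hnf hg1 hg2 hg4 hv1 hv2 hv4 ne12 ne14 ne24 hw0v
  have hc1' := wcases hnf hg1 hg2 hg4 hv1 hv2 hv4 ne12 ne14 ne24 hw0'v
  -- the pair (u1,u2) cannot be chosen for either w0 or w0'
  have hE0 : (∀ t, Dst G u1 u4 t → t = u2 ∨ t = w0 ∨ t = u1 ∨ t = u4) ∨
      (∀ t, Dst G u2 u4 t → t = u1 ∨ t = w0 ∨ t = u2 ∨ t = u4) := by
    rcases hc1 with hb | hb | hb
    · exfalso
      rcases hb w0' hDst12w0' with h | h | h | h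
      exacts [hg4 (h ▸ hw0'v), hw0'n1 (h ▸ hw0u1), hg1 (h ▸ hw0'v), hg2 (h ▸ hw0'v)]
    · exact Or.inl hb
    · exact Or.inr hb
  have hE0' : (∀ t, Dst G u1 u4 t → t = u2 ∨ t = w0' ∨ t = u1 ∨ t = u4) ∨
      (∀ t, Dst G u2 u4 t → t = u1 ∨ t = w0' ∨ t = u2 ∨ t = u4) := by
    rcases hc1' with hb | hb | hb
    · exfalso
      rcases hb w0 hDst12w0 with h | h | h | h
      exacts [hg4 (h ▸ hw0v), hw0'n1 (h.symm ▸ hw0u1), hg1 (h ▸ hw0v), hg2 (h ▸ hw0v)]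
    · exact Or.inl hb
    · exact Or.inr hb
  -- helper : u3 cannot be in Δ14 resp Δ24 when those are confined
  have hu3in14 : G.Adj u3 u1 → Dst G u1 u4 u3 :=
    fun h hiff => e34 (hiff.mp h)
  have hu3in24 : G.Adj u3 u2 → Dst G u2 u4 u3 :=
    fun h hiff => e34 (hiff.mp h)
  rcases hE0 with hE0 | hE0 <;> rcases hE0' with hE0' | hE0'
  · -- both (u1,u4) : Δ14 ⊆ {u2}
    have hD14 : ∀ t, Dst G u1 u4 t → t = u2 ∨ t = u1 ∨ t = u4 := by
      intro t ht
      rcases hE0 t ht with h | h | h | h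
      · exact Or.inl h
      · rcases hE0' t ht with h' | h' | h' | h'
        · exact Or.inl h'
        · exact absurd (h.symm.trans h') hnew
        · exact Or.inr (Or.inl h')
        · exact Or.inr (Or.inr h')
      · exact Or.inr (Or.inl h)
      · exact Or.inr (Or.inr h)
    have hn31 : ¬ G.Adj u3 u1 := by
      intro h
      rcases hD14 u3 (hu3in14 h) with h' | h' | h'
      exacts [ne23 h'.symm, ne13 h'.symm, ne34 h']
    have h32 : G.Adj u3 u2 := u3nbr.resolve_left hn31
    have hw0'n4 : ¬ G.Adj u4 w0' := by
      intro h
      have hdst : Dst G u1 u4 w0' := fun hiff => hw0'n1 (hiff.mpr h.symm).symm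
      rcases hD14 w0' hdst with h' | h' | h'
      exacts [hg2 (h' ▸ hw0'v), hg1 (h' ▸ hw0'v), hg4 (h' ▸ hw0'v)]
    have hd142 : Dst G u1 u4 u2 := by
      obtain ⟨t, ht1, ht4, htd⟩ := exists_dst ne14 n14
      rcases hD14 t htd with h | h | h
      · exact h ▸ htd
      exacts [absurd h ht1, absurd h ht4]
    -- free set {v, u1, u3, u4}
    refine hnf v u1 u3 u4 (Ne.symm hv1) (Ne.symm hv3) (Ne.symm hv4) ne13 ne14 ne34 ?_
    have hS : ∀ x : V, G.Adj v x → x ∉ ({v, u1, u3, u4} : Set V) := by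
      intro x hx hmem
      simp only [Set.mem_insert_iff, Set.mem_singleton_iff] at hmem
      rcases hmem with h | h | h | h
      exacts [G.loopless.irrefl v (h ▸ hx), hg1 (h ▸ hx), hg3 (h ▸ hx), hg4 (h ▸ hx)]
    have hu2S : u2 ∉ ({v, u1, u3, u4} : Set V) := by
      simp only [Set.mem_insert_iff, Set.mem_singleton_iff]
      push_neg
      exact ⟨hv2, Ne.symm ne12, ne23, ne24⟩
    refine mkFree ?_ ?_ ?_ ?_ ?_ ?_
    · exact ⟨w0', hS w0' hw0'v, fun hiff => hw0'n1 (hiff.mp hw0'v.symm).symm⟩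
    · refine ⟨u2, hu2S, fun hiff => hg2 ?_⟩
      exact (hiff.mpr h32.symm).symm
    · exact ⟨w0', hS w0' hw0'v, fun hiff => hw0'n4 ((hiff.mp hw0'v.symm).symm)⟩
    · exact ⟨w0', hS w0' hw0'v, fun hiff => hw0'n1 (hiff.mpr hw0'3.symm).symm⟩
    · exact ⟨u2, hu2S, hd142⟩
    · exact ⟨u2, hu2S, fun hiff => e24 (hiff.mp h32.symm)⟩
  · -- mixed : Δ14 ⊆ {u2,w0}, Δ24 ⊆ {u1,w0'}
    exfalso
    by_cases h31 : G.Adj u3 u1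
    · rcases hE0 u3 (hu3in14 h31) with h | h | h | h
      exacts [ne23 h.symm, hg3 (h ▸ hw0v), ne13 h.symm, ne34 h]
    · have h32 : G.Adj u3 u2 := u3nbr.resolve_left h31
      rcases hE0' u3 (hu3in24 h32) with h | h | h | h
      exacts [ne13 h.symm, hg3 (h ▸ hw0'v), ne23 h.symm, ne34 h]
  · -- mixed : Δ24 ⊆ {u1,w0}, Δ14 ⊆ {u2,w0'}
    exfalso
    by_cases h31 : G.Adj u3 u1
    · rcases hE0' u3 (hu3in14 h31) with h | h | h | h
      exacts [ne23 h.symm, hg3 (h ▸ hw0'v), ne13 h.symm, ne34 h]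
    · have h32 : G.Adj u3 u2 := u3nbr.resolve_left h31
      rcases hE0 u3 (hu3in24 h32) with h | h | h | h
      exacts [ne13 h.symm, hg3 (h ▸ hw0v), ne23 h.symm, ne34 h]
  · -- both (u2,u4) : Δ24 ⊆ {u1}
    have hD24 : ∀ t, Dst G u2 u4 t → t = u1 ∨ t = u2 ∨ t = u4 := by
      intro t ht
      rcases hE0 t ht with h | h | h | h
      · exact Or.inl h
      · rcases hE0' t ht with h' | h' | h' | h'
        · exact Or.inl h'
        · exact absurd (h.symm.trans h') hnew
        · exact Or.inr (Or.inl h')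
        · exact Or.inr (Or.inr h')
      · exact Or.inr (Or.inl h)
      · exact Or.inr (Or.inr h)
    have hn32 : ¬ G.Adj u3 u2 := by
      intro h
      rcases hD24 u3 (hu3in24 h) with h' | h' | h'
      exacts [ne13 h'.symm, ne23 h'.symm, ne34 h']
    have h31 : G.Adj u3 u1 := u3nbr.resolve_right hn32
    have hw0n4 : ¬ G.Adj u4 w0 := by
      intro h
      have hdst : Dst G u2 u4 w0 := fun hiff => hw0n2 (hiff.mpr h.symm).symm
      rcases hD24 w0 hdst with h' | h' | h'
      exacts [hg1 (h' ▸ hw0v), hg2 (h' ▸ hw0v), hg4 (h' ▸ hw0v)]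
    have hd241 : Dst G u2 u4 u1 := by
      obtain ⟨t, ht2, ht4, htd⟩ := exists_dst ne24 n24
      rcases hD24 t htd with h | h | h
      · exact h ▸ htd
      exacts [absurd h ht2, absurd h ht4]
    refine hnf v u2 u3 u4 (Ne.symm hv2) (Ne.symm hv3) (Ne.symm hv4) ne23 ne24 ne34 ?_
    have hS : ∀ x : V, G.Adj v x → x ∉ ({v, u2, u3, u4} : Set V) := by
      intro x hx hmem
      simp only [Set.mem_insert_iff, Set.mem_singleton_iff] at hmem
      rcases hmem with h | h | h | h
      exacts [G.loopless.irrefl v (h ▸ hx), hg2 (h ▸ hx), hg3 (h ▸ hx), hg4 (h ▸ hx)]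
    have hu1S : u1 ∉ ({v, u2, u3, u4} : Set V) := by
      simp only [Set.mem_insert_iff, Set.mem_singleton_iff]
      push_neg
      exact ⟨hv1, ne12, ne13, ne14⟩
    refine mkFree ?_ ?_ ?_ ?_ ?_ ?_
    · exact ⟨w0, hS w0 hw0v, fun hiff => hw0n2 (hiff.mp hw0v.symm).symm⟩
    · refine ⟨u1, hu1S, fun hiff => hg1 ?_⟩
      exact (hiff.mpr h31.symm).symm
    · exact ⟨w0, hS w0 hw0v, fun hiff => hw0n4 ((hiff.mp hw0v.symm).symm)⟩
    · exact ⟨w0, hS w0 hw0v, fun hiff => hw0n2 (hiff.mpr hw03.symm).symm⟩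
    · exact ⟨u1, hu1S, hd241⟩
    · exact ⟨u1, hu1S, fun hiff => e14 (hiff.mp h31.symm)⟩

end Branch3

section BranchT

variable {V : Type*} {G : SimpleGraph V}

lemma branchT (hconn : G.Connected) (hd : ∀ a b : V, G.dist a b ≤ 2)
    (hnf : ∀ a b c d : V, a ≠ b → a ≠ c → a ≠ d → b ≠ c → b ≠ d → c ≠ d →
      FreeSet G {a, b, c, d} → False)
    {v a b c d : V}
    (hga : ¬ G.Adj v a) (hgb : ¬ G.Adj v b) (hgc : ¬ G.Adj v c) (hgd : ¬ G.Adj v d)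
    (hva : a ≠ v) (hvb : b ≠ v) (hvc : c ≠ v) (hvd : d ≠ v)
    (hta : ¬ twinRel G v a) (htb : ¬ twinRel G v b) (htc : ¬ twinRel G v c)
    (nab : ¬ twinRel G a b) (nac : ¬ twinRel G a c) (nad : ¬ twinRel G a d)
    (nbc : ¬ twinRel G b c) (nbd : ¬ twinRel G b d) (ncd : ¬ twinRel G c d)
    (hns : ¬ Sing3 G a b c) : False := by
  classical
  have neab : a ≠ b := ntr_ne nab
  have neac : a ≠ c := ntr_ne nac
  have nead : a ≠ d := ntr_ne nad
  have nebc : b ≠ c := ntr_ne nbc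
  have nebd : b ≠ d := ntr_ne nbd
  have necd : c ≠ d := ntr_ne ncd
  have hnof : ¬ FreeSet G {v, a, b, c} := fun hf =>
    hnf v a b c (Ne.symm hva) (Ne.symm hvb) (Ne.symm hvc) neab neac nebc hf
  -- a Fact-extractor for the pair (v, x)
  have fact : ∀ x y z : V, ¬ G.Adj v x → x ≠ v → y ≠ v → z ≠ v → ¬ G.Adj v y → ¬ G.Adj v z →
      (∀ t, Dst G v x t → t ∈ ({v, a, b, c} : Set V)) →
      (∀ w, G.Adj v w → G.Adj x w) ∧
      (∀ u, G.Adj x u → ¬ G.Adj v u → u ∈ ({v, a, b, c} : Set V)) := by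
    intro x y z hgx hxv hyv hzv hgy hgz hb
    constructor
    · intro w hw
      by_contra hnadj
      have hdst : Dst G v x w := fun hiff => hnadj (hiff.mp hw.symm).symm
      have hmem := hb w hdst
      simp only [Set.mem_insert_iff, Set.mem_singleton_iff] at hmem
      rcases hmem with h | h | h | h
      · exact G.loopless.irrefl v (h ▸ hw)
      all_goals first
        | exact hga (h ▸ hw)
        | exact hgb (h ▸ hw)
        | exact hgc (h ▸ hw)
    · intro u hu hnu
      exact hb u (fun hiff => hnu (hiff.mpr hu.symm).symm)
  rcases bad_of_not_free hnof with hb | hb | hb | hb | hb | hb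
  · -- Fact for a : apply branch3 with ordering (b, c, a, d)
    obtain ⟨hF1, hF2'⟩ := fact a b c hga hva hvb hvc hgb hgc hb
    have hF2 : ∀ z, G.Adj a z → ¬ G.Adj v z → z = b ∨ z = c := by
      intro z hz hnz
      have := hF2' z hz hnz
      simp only [Set.mem_insert_iff, Set.mem_singleton_iff] at this
      rcases this with h | h | h | h
      · exact absurd (h ▸ hz).symm hga
      · exact (G.loopless.irrefl a (h ▸ hz)).elim
      · exact Or.inl h
      · exact Or.inr h
    exact branch3 hconn hd hnf hgb hgc hga hgd hvb hvc hva hvd hta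
      nbc (ntr_symm nab) nbd (ntr_symm nac) ncd nad
      (fun h => hns (sing3_rot h)) hF1 hF2
  · -- Fact for b : ordering (a, c, b, d)
    obtain ⟨hF1, hF2'⟩ := fact b a c hgb hvb hva hvc hga hgc hb
    have hF2 : ∀ z, G.Adj b z → ¬ G.Adj v z → z = a ∨ z = c := by
      intro z hz hnz
      have := hF2' z hz hnz
      simp only [Set.mem_insert_iff, Set.mem_singleton_iff] at this
      rcases this with h | h | h | h
      · exact absurd (h ▸ hz).symm hgb
      · exact Or.inl h
      · exact (G.loopless.irrefl b (h ▸ hz)).elim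
      · exact Or.inr h
    exact branch3 hconn hd hnf hga hgc hgb hgd hva hvc hvb hvd htb
      nac nab nad (ntr_symm nbc) ncd nbd
      (fun h => hns (sing3_swap23 h)) hF1 hF2
  · -- Fact for c : ordering (a, b, c, d)
    obtain ⟨hF1, hF2'⟩ := fact c a b hgc hvc hva hvb hga hgb hb
    have hF2 : ∀ z, G.Adj c z → ¬ G.Adj v z → z = a ∨ z = b := by
      intro z hz hnz
      have := hF2' z hz hnz
      simp only [Set.mem_insert_iff, Set.mem_singleton_iff] at this
      rcases this with h | h | h | h
      · exact absurd (h ▸ hz).symm hgc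
      · exact Or.inl h
      · exact Or.inr h
      · exact (G.loopless.irrefl c (h ▸ hz)).elim
    exact branch3 hconn hd hnf hga hgb hgc hgd hva hvb hvc hvd htc
      nab nac nad nbc nbd ncd hns hF1 hF2
  · -- pair (a,b): gives SP a b c
    refine hns (Or.inl ?_)
    intro t ht
    have := hb t ht
    simp only [Set.mem_insert_iff, Set.mem_singleton_iff] at this
    rcases this with h | h | h | h
    · exact absurd (h ▸ ht) (fun hd' => hd' ⟨fun hh => absurd hh hga, fun hh => absurd hh hgb⟩)
    · exact Or.inr (Or.inl h)
    · exact Or.inr (Or.inr h)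
    · exact Or.inl h
  · -- pair (a,c): gives SP a c b
    refine hns (Or.inr (Or.inl ?_))
    intro t ht
    have := hb t ht
    simp only [Set.mem_insert_iff, Set.mem_singleton_iff] at this
    rcases this with h | h | h | h
    · exact absurd (h ▸ ht) (fun hd' => hd' ⟨fun hh => absurd hh hga, fun hh => absurd hh hgc⟩)
    · exact Or.inr (Or.inl h)
    · exact Or.inl h
    · exact Or.inr (Or.inr h)
  · -- pair (b,c): gives SP b c a
    refine hns (Or.inr (Or.inr ?_))
    intro t ht
    have := hb t ht
    simp only [Set.mem_insert_iff, Set.mem_singleton_iff] at this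
    rcases this with h | h | h | h
    · exact absurd (h ▸ ht) (fun hd' => hd' ⟨fun hh => absurd hh hgb, fun hh => absurd hh hgc⟩)
    · exact Or.inl h
    · exact Or.inr (Or.inl h)
    · exact Or.inr (Or.inr h)

end BranchT

/-- selector for four vertices -/
def pick {V : Type*} (u1 u2 u3 u4 : V) : Fin 4 → V :=
  fun i => if i = 0 then u1 else if i = 1 then u2 else if i = 2 then u3 else u4

section CoreFinal

variable {V : Type*} {G : SimpleGraph V}

lemma conflictSP {x y p q : V} (nxy : ¬ twinRel G x y) (hpq : p ≠ q)
    (h1 : SP G x y p) (h2 : SP G x y q) : False := by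
  obtain ⟨t, htx, hty, htd⟩ := exists_dst (ntr_ne nxy) nxy
  have e1 : t = p := by
    rcases h1 t htd with h | h | h
    exacts [h, absurd h htx, absurd h hty]
  have e2 : t = q := by
    rcases h2 t htd with h | h | h
    exacts [h, absurd h htx, absurd h hty]
  exact hpq (e1 ▸ e2)

lemma core (hconn : G.Connected) (hd : ∀ a b : V, G.dist a b ≤ 2)
    (hnf : ∀ a b c d : V, a ≠ b → a ≠ c → a ≠ d → b ≠ c → b ≠ d → c ≠ d →
      FreeSet G {a, b, c, d} → False)
    {v u1 u2 u3 u4 : V}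
    (hg1 : ¬ G.Adj v u1) (hg2 : ¬ G.Adj v u2) (hg3 : ¬ G.Adj v u3) (hg4 : ¬ G.Adj v u4)
    (hvt1 : ¬ twinRel G v u1) (hvt2 : ¬ twinRel G v u2) (hvt3 : ¬ twinRel G v u3)
    (hvt4 : ¬ twinRel G v u4)
    (n12 : ¬ twinRel G u1 u2) (n13 : ¬ twinRel G u1 u3) (n14 : ¬ twinRel G u1 u4)
    (n23 : ¬ twinRel G u2 u3) (n24 : ¬ twinRel G u2 u4) (n34 : ¬ twinRel G u3 u4) :
    False := by
  classical
  have hv1 : u1 ≠ v := fun h => hvt1 (Or.inl h.symm)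
  have hv2 : u2 ≠ v := fun h => hvt2 (Or.inl h.symm)
  have hv3 : u3 ≠ v := fun h => hvt3 (Or.inl h.symm)
  have hv4 : u4 ≠ v := fun h => hvt4 (Or.inl h.symm)
  have ne12 : u1 ≠ u2 := ntr_ne n12
  have ne13 : u1 ≠ u3 := ntr_ne n13
  have ne14 : u1 ≠ u4 := ntr_ne n14
  have ne23 : u2 ≠ u3 := ntr_ne n23
  have ne24 : u2 ≠ u4 := ntr_ne n24
  have ne34 : u3 ≠ u4 := ntr_ne n34
  by_cases s123 : Sing3 G u1 u2 u3
  case neg =>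
    exact branchT hconn hd hnf hg1 hg2 hg3 hg4 hv1 hv2 hv3 hv4 hvt1 hvt2 hvt3
      n12 n13 n14 n23 n24 n34 s123
  by_cases s124 : Sing3 G u1 u2 u4
  case neg =>
    exact branchT hconn hd hnf hg1 hg2 hg4 hg3 hv1 hv2 hv4 hv3 hvt1 hvt2 hvt4
      n12 n14 n13 n24 n23 (ntr_symm n34) s124
  by_cases s134 : Sing3 G u1 u3 u4
  case neg =>
    exact branchT hconn hd hnf hg1 hg3 hg4 hg2 hv1 hv3 hv4 hv2 hvt1 hvt3 hvt4
      n13 n14 n12 n34 (ntr_symm n23) (ntr_symm n24) s134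
  by_cases s234 : Sing3 G u2 u3 u4
  case neg =>
    exact branchT hconn hd hnf hg2 hg3 hg4 hg1 hv2 hv3 hv4 hv1 hvt2 hvt3 hvt4
      n23 n24 (ntr_symm n12) n34 (ntr_symm n13) (ntr_symm n14) s234
  -- all four triples are "singular" : apply the H-completion argument
  have m1 : u1 = u1 ∨ u1 = u2 ∨ u1 = u3 ∨ u1 = u4 := Or.inl rfl
  have m2 : u2 = u1 ∨ u2 = u2 ∨ u2 = u3 ∨ u2 = u4 := Or.inr (Or.inl rfl)
  have m3 : u3 = u1 ∨ u3 = u2 ∨ u3 = u3 ∨ u3 = u4 := Or.inr (Or.inr (Or.inl rfl))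
  have m4 : u4 = u1 ∨ u4 = u2 ∨ u4 = u3 ∨ u4 = u4 := Or.inr (Or.inr (Or.inr rfl))
  have hHP := abstract81
    (s := fun a b c => SP G a b c ∧ (a = u1 ∨ a = u2 ∨ a = u3 ∨ a = u4) ∧
      (b = u1 ∨ b = u2 ∨ b = u3 ∨ b = u4) ∧ (c = u1 ∨ c = u2 ∨ c = u3 ∨ c = u4))
    (h := fun a b => ∀ t, Dst G a b t → (t = u1 ∨ t = u2 ∨ t = u3 ∨ t = u4))
    (x0 := u1) (x1 := u2) (x2 := u3) (x3 := u4)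
    (hs := by
      rintro a b c ⟨hsp, ha, hb, hc⟩ t ht
      rcases hsp t ht with h | h | h
      exacts [h ▸ hc, h ▸ ha, h ▸ hb])
    (hsym := fun a b h t ht => h t ht.symm')
    (htr := by
      intro a b c hab hbc t ht
      by_cases h1 : (G.Adj t a ↔ G.Adj t b)
      · exact hbc t (fun h2 => ht (h1.trans h2))
      · exact hab t h1)
    (c1 := fun h1 h2 => conflictSP n12 ne34 h1.1 h2.1)
    (c2 := fun h1 h2 => conflictSP n13 ne24 h1.1 h2.1)
    (c3 := fun h1 h2 => conflictSP n14 ne23 h1.1 h2.1)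
    (c4 := fun h1 h2 => conflictSP n23 ne14 h1.1 h2.1)
    (c5 := fun h1 h2 => conflictSP n24 ne13 h1.1 h2.1)
    (c6 := fun h1 h2 => conflictSP n34 ne12 h1.1 h2.1)
    (t1 := by
      rcases s123 with h | h | h
      exacts [Or.inl ⟨h, m1, m2, m3⟩, Or.inr (Or.inl ⟨h, m1, m3, m2⟩),
        Or.inr (Or.inr ⟨h, m2, m3, m1⟩)])
    (t2 := by
      rcases s124 with h | h | h
      exacts [Or.inl ⟨h, m1, m2, m4⟩, Or.inr (Or.inl ⟨h, m1, m4, m2⟩),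
        Or.inr (Or.inr ⟨h, m2, m4, m1⟩)])
    (t3 := by
      rcases s134 with h | h | h
      exacts [Or.inl ⟨h, m1, m3, m4⟩, Or.inr (Or.inl ⟨h, m1, m4, m3⟩),
        Or.inr (Or.inr ⟨h, m3, m4, m1⟩)])
    (t4 := by
      rcases s234 with h | h | h
      exacts [Or.inl ⟨h, m2, m3, m4⟩, Or.inr (Or.inl ⟨h, m2, m4, m3⟩),
        Or.inr (Or.inr ⟨h, m3, m4, m2⟩)])
  obtain ⟨hp12, hp13, hp14, hp23, hp24, hp34⟩ := hHP
  -- the common neighbour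
  obtain ⟨w0, hw0v, hw0u1⟩ := common_nbr hconn hd (Ne.symm hv1) hg1
  have hw0not : ∀ x y : V, (∀ t, Dst G x y t → (t = u1 ∨ t = u2 ∨ t = u3 ∨ t = u4)) →
      (G.Adj w0 x ↔ G.Adj w0 y) := by
    intro x y hp
    by_contra hdst
    rcases hp w0 hdst with h | h | h | h
    exacts [hg1 (h ▸ hw0v), hg2 (h ▸ hw0v), hg3 (h ▸ hw0v), hg4 (h ▸ hw0v)]
  have hw0u2 : G.Adj u2 w0 := ((hw0not u1 u2 hp12).mp hw0u1.symm).symm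
  have hw0u3 : G.Adj u3 w0 := ((hw0not u1 u3 hp13).mp hw0u1.symm).symm
  have hw0u4 : G.Adj u4 w0 := ((hw0not u1 u4 hp14).mp hw0u1.symm).symm
  -- boolean adjacency facts
  have mkne : ∀ {x y t : V}, Dst G x y t → decide (G.Adj x t) ≠ decide (G.Adj y t) := by
    intro x y t htd heq
    have hiff := decide_eq_decide.mp heq
    exact htd ⟨fun h => (hiff.mp h.symm).symm, fun h => (hiff.mpr h.symm).symm⟩
  have flip : ∀ x y : V, decide (G.Adj x y) = decide (G.Adj y x) := fun x y =>
    decide_eq_decide.mpr ⟨fun h => h.symm, fun h => h.symm⟩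
  have getw : ∀ {x y : V}, x ≠ y → ¬ twinRel G x y →
      (∀ t, Dst G x y t → (t = u1 ∨ t = u2 ∨ t = u3 ∨ t = u4)) →
      ∃ t, (t = u1 ∨ t = u2 ∨ t = u3 ∨ t = u4) ∧ t ≠ x ∧ t ≠ y ∧ Dst G x y t := by
    intro x y hne hn hp
    obtain ⟨t, htx, hty, htd⟩ := exists_dst hne hn
    exact ⟨t, hp t htd, htx, hty, htd⟩
  have H12 : (decide (G.Adj u1 u3) ≠ decide (G.Adj u2 u3)) ∨
      (decide (G.Adj u1 u4) ≠ decide (G.Adj u2 u4)) := by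
    obtain ⟨t, hmem, htx, hty, htd⟩ := getw ne12 n12 hp12
    rcases hmem with h | h | h | h <;> rw [h] at htd htx hty
    · exact absurd rfl htx
    · exact absurd rfl hty
    · exact Or.inl (mkne htd)
    · exact Or.inr (mkne htd)
  have H13 : (decide (G.Adj u1 u2) ≠ decide (G.Adj u2 u3)) ∨
      (decide (G.Adj u1 u4) ≠ decide (G.Adj u3 u4)) := by
    obtain ⟨t, hmem, htx, hty, htd⟩ := getw ne13 n13 hp13
    rcases hmem with h | h | h | h <;> rw [h] at htd htx hty
    · exact absurd rfl htx
    · exact Or.inl (by rw [flip u2 u3]; exact mkne htd)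
    · exact absurd rfl hty
    · exact Or.inr (mkne htd)
  have H14 : (decide (G.Adj u1 u2) ≠ decide (G.Adj u2 u4)) ∨
      (decide (G.Adj u1 u3) ≠ decide (G.Adj u3 u4)) := by
    obtain ⟨t, hmem, htx, hty, htd⟩ := getw ne14 n14 hp14
    rcases hmem with h | h | h | h <;> rw [h] at htd htx hty
    · exact absurd rfl htx
    · exact Or.inl (by rw [flip u2 u4]; exact mkne htd)
    · exact Or.inr (by rw [flip u3 u4]; exact mkne htd)
    · exact absurd rfl hty
  have H23 : (decide (G.Adj u1 u2) ≠ decide (G.Adj u1 u3)) ∨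
      (decide (G.Adj u2 u4) ≠ decide (G.Adj u3 u4)) := by
    obtain ⟨t, hmem, htx, hty, htd⟩ := getw ne23 n23 hp23
    rcases hmem with h | h | h | h <;> rw [h] at htd htx hty
    · exact Or.inl (by rw [flip u1 u2, flip u1 u3]; exact mkne htd)
    · exact absurd rfl htx
    · exact absurd rfl hty
    · exact Or.inr (mkne htd)
  have H24 : (decide (G.Adj u1 u2) ≠ decide (G.Adj u1 u4)) ∨
      (decide (G.Adj u2 u3) ≠ decide (G.Adj u3 u4)) := by
    obtain ⟨t, hmem, htx, hty, htd⟩ := getw ne24 n24 hp24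
    rcases hmem with h | h | h | h <;> rw [h] at htd htx hty
    · exact Or.inl (by rw [flip u1 u2, flip u1 u4]; exact mkne htd)
    · exact absurd rfl htx
    · exact Or.inr (by rw [flip u3 u4]; exact mkne htd)
    · exact absurd rfl hty
  have H34 : (decide (G.Adj u1 u3) ≠ decide (G.Adj u1 u4)) ∨
      (decide (G.Adj u2 u3) ≠ decide (G.Adj u2 u4)) := by
    obtain ⟨t, hmem, htx, hty, htd⟩ := getw ne34 n34 hp34
    rcases hmem with h | h | h | h <;> rw [h] at htd htx hty
    · exact Or.inl (by rw [flip u1 u3, flip u1 u4]; exact mkne htd)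
    · exact Or.inr (by rw [flip u2 u3, flip u2 u4]; exact mkne htd)
    · exact absurd rfl htx
    · exact absurd rfl hty
  obtain ⟨i, j, k, l, nij, nik, nil, njk, njl, nkl, q1, q2, q3, q4, q5, q6⟩ :=
    pathLemma (decide (G.Adj u1 u2)) (decide (G.Adj u1 u3)) (decide (G.Adj u1 u4))
      (decide (G.Adj u2 u3)) (decide (G.Adj u2 u4)) (decide (G.Adj u3 u4))
      H12 H13 H14 H23 H24 H34
  have conv : ∀ i j : Fin 4, i ≠ j →
      ((mat6 (decide (G.Adj u1 u2)) (decide (G.Adj u1 u3)) (decide (G.Adj u1 u4))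
        (decide (G.Adj u2 u3)) (decide (G.Adj u2 u4)) (decide (G.Adj u3 u4)) i j = true) ↔
        G.Adj (pick u1 u2 u3 u4 i) (pick u1 u2 u3 u4 j)) := by
    intro i j hij
    fin_cases i <;> fin_cases j <;>
      first
      | exact absurd rfl hij
      | (simp [mat6, pick, decide_eq_true_iff]; try exact G.adj_comm _ _)
  have pinj : ∀ i j : Fin 4, i ≠ j → pick u1 u2 u3 u4 i ≠ pick u1 u2 u3 u4 j := by
    intro i j hij
    fin_cases i <;> fin_cases j <;>
      first
      | exact absurd rfl hij
      | (simp only [pick]; norm_num [Fin.ext_iff]) <;>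
        first
        | exact ne12 | exact ne13 | exact ne14 | exact ne23 | exact ne24 | exact ne34
        | exact Ne.symm ne12 | exact Ne.symm ne13 | exact Ne.symm ne14
        | exact Ne.symm ne23 | exact Ne.symm ne24 | exact Ne.symm ne34
  have hgAll : ∀ m : Fin 4, ¬ G.Adj v (pick u1 u2 u3 u4 m) := by
    intro m
    fin_cases m <;> (simp only [pick]; norm_num [Fin.ext_iff]) <;>
      first | exact hg1 | exact hg2 | exact hg3 | exact hg4
  have hwAll : ∀ m : Fin 4, G.Adj (pick u1 u2 u3 u4 m) w0 := by
    intro m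
    fin_cases m <;> (simp only [pick]; norm_num [Fin.ext_iff]) <;>
      first | exact hw0u1 | exact hw0u2 | exact hw0u3 | exact hw0u4
  set A := pick u1 u2 u3 u4 i with hA
  set B := pick u1 u2 u3 u4 j with hB
  set C := pick u1 u2 u3 u4 k with hC
  set D := pick u1 u2 u3 u4 l with hD
  have hAB : G.Adj A B := (conv i j nij).mp q1
  have hBC : G.Adj B C := (conv j k njk).mp q2
  have hCD : G.Adj C D := (conv k l nkl).mp q3
  have nAC : ¬ G.Adj A C := by
    intro h
    have := (conv i k nik).mpr h
    rw [q4] at this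
    exact Bool.false_ne_true this
  have nAD : ¬ G.Adj A D := by
    intro h
    have := (conv i l nil).mpr h
    rw [q5] at this
    exact Bool.false_ne_true this
  have nBD : ¬ G.Adj B D := by
    intro h
    have := (conv j l njl).mpr h
    rw [q6] at this
    exact Bool.false_ne_true this
  have hw0ne : ∀ m : Fin 4, pick u1 u2 u3 u4 m ≠ w0 := fun m h => hgAll m (h ▸ hw0v)
  have hvne : ∀ m : Fin 4, pick u1 u2 u3 u4 m ≠ v := by
    intro m
    fin_cases m <;> (simp only [pick]; norm_num [Fin.ext_iff]) <;>
      first | exact hv1 | exact hv2 | exact hv3 | exact hv4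
  have hAS : A ∉ ({v, B, C, w0} : Set V) := by
    simp only [Set.mem_insert_iff, Set.mem_singleton_iff]
    push_neg
    exact ⟨hvne i, pinj i j nij, pinj i k nik, hw0ne i⟩
  have hDS : D ∉ ({v, B, C, w0} : Set V) := by
    simp only [Set.mem_insert_iff, Set.mem_singleton_iff]
    push_neg
    exact ⟨hvne l, Ne.symm (pinj j l njl), Ne.symm (pinj k l nkl), hw0ne l⟩
  refine hnf v B C w0 (Ne.symm (hvne j)) (Ne.symm (hvne k))
    (fun h => G.loopless.irrefl v (h ▸ hw0v)) (pinj j k njk) (hw0ne j)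
    (hw0ne k) ?_
  refine mkFree ?_ ?_ ?_ ?_ ?_ ?_
  · exact ⟨A, hAS, fun hiff => hgAll i ((hiff.mpr hAB).symm)⟩
  · exact ⟨D, hDS, fun hiff => hgAll l ((hiff.mpr hCD.symm).symm)⟩
  · exact ⟨A, hAS, fun hiff => hgAll i ((hiff.mpr (hwAll i)).symm)⟩
  · exact ⟨A, hAS, fun hiff => nAC (hiff.mp hAB)⟩
  · exact ⟨D, hDS, fun hiff => nBD ((hiff.mpr (hwAll l)).symm)⟩
  · exact ⟨A, hAS, fun hiff => nAC (hiff.mpr (hwAll i))⟩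

end CoreFinal

section Main

variable {V : Type*} {G : SimpleGraph V}

lemma gammaStar_props {v : V} {A : TwinVertex G} (hA : A ∈ GammaStar G 2 v) :
    ∃ a : V, a ∈ A.1 ∧ ¬ G.Adj v a ∧ ¬ twinRel G v a := by
  obtain ⟨a, ha⟩ := A.2
  have hmem : a ∈ A.1 := by rw [ha]; exact twinRel_refl a
  have hdist : (twinGraph G).dist A (cls G v) = 2 := hA
  have hne : A ≠ cls G v := by
    intro h
    rw [h, SimpleGraph.dist_self] at hdist
    exact absurd hdist (by norm_num)
  have hnadj : ¬ G.Adj v a := by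
    intro hadj
    have hadjT : (twinGraph G).Adj A (cls G v) :=
      ⟨hne, a, hmem, v, twinRel_refl v, hadj.symm⟩
    have hle := SimpleGraph.dist_le (SimpleGraph.Walk.cons hadjT SimpleGraph.Walk.nil)
    rw [hdist] at hle
    norm_num at hle
  have hnrel : ¬ twinRel G v a := by
    intro hrel
    apply hne
    apply Subtype.ext
    rw [ha]
    exact twinClass_eq_of_rel (twinRel_symm hrel)
  exact ⟨a, hmem, hnadj, hnrel⟩

lemma reps_not_rel {A B : TwinVertex G} (hne : A ≠ B) {a b : V}
    (ha : a ∈ A.1) (hb : b ∈ B.1) : ¬ twinRel G a b := by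
  intro hrel
  apply hne
  apply Subtype.ext
  obtain ⟨a0, hA0⟩ := A.2
  obtain ⟨b0, hB0⟩ := B.2
  rw [hA0] at ha
  rw [hB0] at hb
  have ha' : twinRel G a0 a := ha
  have hb' : twinRel G b0 b := hb
  rw [hA0, hB0]
  calc twinClass G a0 = twinClass G a := twinClass_eq_of_rel ha'
    _ = twinClass G b := twinClass_eq_of_rel hrel
    _ = twinClass G b0 := (twinClass_eq_of_rel hb').symm

end Main

/-- If `G` is connected of order `n`, `diam(G) = 2`, `β(G) = n - 3`, and `v` is a
vertex with `Γ_2^*(v^*) ≠ ∅` and `Γ_1(v)` homogeneous, then `|Γ_2^*(v^*)| ≤ 3`. -/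
theorem gammaStar_two_card_le_three
    {V : Type*} [Fintype V] (G : SimpleGraph V)
    (hdiam : diamEq G 2)
    (hbeta : metricDim G = Fintype.card V - 3)
    (v : V) (h2 : (GammaStar G 2 v).Nonempty)
    (hhom : Homogeneous G (Gamma G 1 v)) :
    (GammaStar G 2 v).ncard ≤ 3 := by
  classical
  obtain ⟨hconn, hd, -⟩ := hdiam
  have hfinTV : Finite (TwinVertex G) := by
    unfold TwinVertex
    infer_instance
  by_contra hgt
  push_neg at hgt
  have h4 : 4 ≤ (GammaStar G 2 v).ncard := hgt
  obtain ⟨T, hTsub, hT4⟩ := Set.exists_subset_card_eq h4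
  have hTne : T.Nonempty := Set.nonempty_of_ncard_ne_zero (by omega)
  obtain ⟨A1, hA1T⟩ := hTne
  have h3 : (T \ {A1}).ncard = 3 := by
    rw [Set.ncard_diff_singleton_of_mem hA1T, hT4]
  obtain ⟨A2, A3, A4, h23, h24, h34, hTeq⟩ := Set.ncard_eq_three.mp h3
  have hA2d : A2 ∈ T \ {A1} := by rw [hTeq]; exact Set.mem_insert _ _
  have hA3d : A3 ∈ T \ {A1} := by
    rw [hTeq]; exact Set.mem_insert_of_mem _ (Set.mem_insert _ _)
  have hA4d : A4 ∈ T \ {A1} := by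
    rw [hTeq]
    exact Set.mem_insert_of_mem _ (Set.mem_insert_of_mem _ rfl)
  have h12 : A1 ≠ A2 := fun h => hA2d.2 (by rw [← h]; rfl)
  have h13 : A1 ≠ A3 := fun h => hA3d.2 (by rw [← h]; rfl)
  have h14 : A1 ≠ A4 := fun h => hA4d.2 (by rw [← h]; rfl)
  have hg1 : A1 ∈ GammaStar G 2 v := hTsub hA1T
  have hg2 : A2 ∈ GammaStar G 2 v := hTsub hA2d.1
  have hg3 : A3 ∈ GammaStar G 2 v := hTsub hA3d.1
  have hg4 : A4 ∈ GammaStar G 2 v := hTsub hA4d.1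
  obtain ⟨a1, ha1m, ha1adj, ha1rel⟩ := gammaStar_props hg1
  obtain ⟨a2, ha2m, ha2adj, ha2rel⟩ := gammaStar_props hg2
  obtain ⟨a3, ha3m, ha3adj, ha3rel⟩ := gammaStar_props hg3
  obtain ⟨a4, ha4m, ha4adj, ha4rel⟩ := gammaStar_props hg4
  have hnf : ∀ a b c d : V, a ≠ b → a ≠ c → a ≠ d → b ≠ c → b ≠ d → c ≠ d →
      FreeSet G {a, b, c, d} → False := by
    intro a b c d hab hac had hbc hbd hcd hfree
    exact noFree hconn hd hbeta hab hac had hbc hbd hcd hfree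
  exact core hconn hd hnf ha1adj ha2adj ha3adj ha4adj ha1rel ha2rel ha3rel ha4rel
    (reps_not_rel h12 ha1m ha2m) (reps_not_rel h13 ha1m ha3m)
    (reps_not_rel h14 ha1m ha4m) (reps_not_rel h23 ha2m ha3m)
    (reps_not_rel h24 ha2m ha4m) (reps_not_rel h34 ha3m ha4m)

end PaperMetricDim
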